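/- For every natural number k, the ℝ-subspace of MvPolynomial (Fin 3) ℝ consisting of polynomials that are homogeneous of degree k and harmonic has finrank equal to 2k + 1. -/

import Mathlib

open MvPolynomial

/-- The Laplacian on polynomials in three variables. -/
noncomputable def laplacian : MvPolynomial (Fin 3) ℝ →ₗ[ℝ] MvPolynomial (Fin 3) ℝ :=
  ∑ i : Fin 3,
    ((MvPolynomial.pderiv i).toLinearMap ∘ₗ (MvPolynomial.pderiv i).toLinearMap)

lemma card_toMultiset_eq_degree (d : Fin 3 →₀ ℕ) :
    Multiset.card (Finsupp.toMultiset d) = d.degree := by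
  rw [Finsupp.card_toMultiset]; simp [Finsupp.degree_apply, Finsupp.sum]

noncomputable def degEquivSym (k : ℕ) :
    {d : Fin 3 →₀ ℕ // d.degree = k} ≃ Sym (Fin 3) k where
  toFun d := ⟨Finsupp.toMultiset d.1, by rw [card_toMultiset_eq_degree]; exact d.2⟩
  invFun m := ⟨Multiset.toFinsupp m.1, by
    rw [← card_toMultiset_eq_degree]; simp [m.2]⟩
  left_inv d := by ext : 1; simp
  right_inv m := by ext : 1; simp

noncomputable instance (k : ℕ) : Fintype {d : Fin 3 →₀ ℕ // d.degree = k} :=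
  Fintype.ofEquiv _ (degEquivSym k).symm

lemma card_degSet (k : ℕ) :
    Fintype.card {d : Fin 3 →₀ ℕ // d.degree = k} = (k + 2).choose 2 := by
  rw [Fintype.card_congr (degEquivSym k), Sym.card_sym_eq_choose, Fintype.card_fin,
    show 3 + k - 1 = k + 2 by omega, ← Nat.choose_symm (by omega : k ≤ k + 2),
    show k + 2 - k = 2 by omega]

noncomputable instance (k : ℕ) : Fintype ↥{d : Fin 3 →₀ ℕ | d.degree = k} :=
  inferInstanceAs (Fintype {d : Fin 3 →₀ ℕ // d.degree = k})

lemma finrank_hs (k : ℕ) :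
    Module.finrank ℝ ↥(homogeneousSubmodule (Fin 3) ℝ k) = (k + 2).choose 2 := by
  rw [homogeneousSubmodule_eq_finsupp_supported,
    show AddMonoidAlgebra.supported ℝ ℝ {d : Fin 3 →₀ ℕ | d.degree = k}
      = restrictSupport ℝ {d : Fin 3 →₀ ℕ | d.degree = k} from rfl,
    Module.finrank_eq_card_basis (basisRestrictSupport ℝ _)]
  exact card_degSet k

lemma my_degree_add (a b : Fin 3 →₀ ℕ) : (a + b).degree = a.degree + b.degree := by
  simp only [Finsupp.degree_eq_weight_one, map_add]

lemma my_degree_single (i : Fin 3) (n : ℕ) : (Finsupp.single i n).degree = n := by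
  simp [Finsupp.degree_eq_weight_one, Finsupp.weight_apply, Finsupp.sum_single_index]

lemma pderiv_mem_hs {k : ℕ} {p : MvPolynomial (Fin 3) ℝ}
    (hp : p ∈ homogeneousSubmodule (Fin 3) ℝ k) (i : Fin 3) :
    pderiv i p ∈ homogeneousSubmodule (Fin 3) ℝ (k - 1) := by
  rw [mem_homogeneousSubmodule] at hp ⊢
  conv_lhs => rw [p.as_sum]
  rw [map_sum]
  apply IsHomogeneous.sum
  intro d hd
  rw [pderiv_monomial]
  by_cases h : d i = 0
  · simpa [h] using isHomogeneous_zero (Fin 3) ℝ (k - 1)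
  · apply isHomogeneous_monomial
    have hdk : d.degree = k := by
      by_contra hne
      exact (MvPolynomial.mem_support_iff.mp hd) (hp.coeff_eq_zero hne)
    have hle : Finsupp.single i 1 ≤ d := Finsupp.single_le_iff.mpr (by omega)
    have : (d - Finsupp.single i 1) + Finsupp.single i 1 = d := tsub_add_cancel_of_le hle
    have h2 := congrArg Finsupp.degree this
    rw [my_degree_add, my_degree_single] at h2
    omega

lemma pderiv_eq_zero_of_hs0 {p : MvPolynomial (Fin 3) ℝ}
    (hp : p ∈ homogeneousSubmodule (Fin 3) ℝ 0) (i : Fin 3) : pderiv i p = 0 := by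
  rw [mem_homogeneousSubmodule] at hp
  conv_lhs => rw [p.as_sum]
  rw [map_sum]
  apply Finset.sum_eq_zero
  intro d hd
  have hdk : d.degree = 0 := by
    by_contra hne
    exact (MvPolynomial.mem_support_iff.mp hd) (hp.coeff_eq_zero hne)
  have : d = 0 := (Finsupp.degree_eq_zero_iff d).mp hdk
  subst this
  simp [pderiv_monomial]

lemma laplacian_apply (p : MvPolynomial (Fin 3) ℝ) :
    laplacian p = ∑ i : Fin 3, pderiv i (pderiv i p) := by
  simp [laplacian, LinearMap.sum_apply]

lemma laplacian_mem_hs {k : ℕ} {p : MvPolynomial (Fin 3) ℝ}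
    (hp : p ∈ homogeneousSubmodule (Fin 3) ℝ k) :
    laplacian p ∈ homogeneousSubmodule (Fin 3) ℝ (k - 2) := by
  rw [laplacian_apply]
  apply Submodule.sum_mem
  intro i _
  have h2 := pderiv_mem_hs (pderiv_mem_hs hp i) i
  rwa [show k - 1 - 1 = k - 2 by omega] at h2

lemma laplacian_eq_zero_of_le_one {k : ℕ} (hk : k ≤ 1) {p : MvPolynomial (Fin 3) ℝ}
    (hp : p ∈ homogeneousSubmodule (Fin 3) ℝ k) : laplacian p = 0 := by
  rw [laplacian_apply]
  apply Finset.sum_eq_zero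
  intro i _
  have h1 : pderiv i p ∈ homogeneousSubmodule (Fin 3) ℝ 0 := by
    have := pderiv_mem_hs hp i
    rwa [show k - 1 = 0 by omega] at this
  exact pderiv_eq_zero_of_hs0 h1 i

lemma laplacian_monomial (e : Fin 3 →₀ ℕ) (s : ℝ) :
    laplacian (monomial e s) = ∑ i : Fin 3,
      monomial (e - Finsupp.single i 1 - Finsupp.single i 1)
        (s * (e i : ℝ) * ((((e - Finsupp.single i 1 : Fin 3 →₀ ℕ) i : ℕ) : ℝ))) := by
  rw [laplacian_apply]
  refine Finset.sum_congr rfl fun i _ => ?_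
  rw [pderiv_monomial, pderiv_monomial]

lemma my_degree_fin3 (d : Fin 3 →₀ ℕ) : d.degree = d 0 + d 1 + d 2 := by
  rw [Finsupp.degree_apply,
    Finset.sum_subset (Finset.subset_univ _)
      (by intro x _ hx; simpa using Finsupp.notMem_support_iff.mp hx)]
  exact Fin.sum_univ_three d

lemma monomial_mem_map (m : ℕ) (n : ℕ) : ∀ (d : Fin 3 →₀ ℕ), d 1 + d 2 ≤ n → d.degree = m →
    ∀ r : ℝ, (monomial d) r ∈
      Submodule.map laplacian (homogeneousSubmodule (Fin 3) ℝ (m + 2)) := by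
  induction n using Nat.strong_induction_on with
  | _ n ih =>
  intro d hdn hdeg r
  set e : Fin 3 →₀ ℕ := d + Finsupp.single 0 2 with he
  have he0 : e 0 = d 0 + 2 := by simp [he, Finsupp.add_apply]
  have he1 : e 1 = d 1 := by simp [he, Finsupp.add_apply, Finsupp.single_apply]
  have he2 : e 2 = d 2 := by simp [he, Finsupp.add_apply, Finsupp.single_apply]
  have hedeg : e.degree = m + 2 := by
    rw [my_degree_fin3, he0, he1, he2]
    rw [my_degree_fin3] at hdeg
    omega
  set s : ℝ := r / (((d 0 : ℝ) + 2) * ((d 0 : ℝ) + 1)) with hs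
  have hmem : (monomial e) s ∈ homogeneousSubmodule (Fin 3) ℝ (m + 2) :=
    isHomogeneous_monomial s hedeg
  -- exponents
  have hd0exp : e - Finsupp.single 0 1 - Finsupp.single 0 1 = d := by
    ext j
    simp only [Finsupp.tsub_apply, he, Finsupp.add_apply, Finsupp.single_apply]
    fin_cases j <;> simp
  have hsub1 : ∀ (i : Fin 3), (e - Finsupp.single i 1 : Fin 3 →₀ ℕ) i = e i - 1 := by
    intro i; simp [Finsupp.tsub_apply]
  -- the Laplacian of the chosen monomial
  have hlap := laplacian_monomial e s
  rw [Fin.sum_univ_three] at hlap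
  set d1 : Fin 3 →₀ ℕ := e - Finsupp.single 1 1 - Finsupp.single 1 1 with hd1
  set d2 : Fin 3 →₀ ℕ := e - Finsupp.single 2 1 - Finsupp.single 2 1 with hd2
  set c1 : ℝ := s * (e 1 : ℝ) * (((e - Finsupp.single 1 1 : Fin 3 →₀ ℕ) 1 : ℕ) : ℝ) with hc1
  set c2 : ℝ := s * (e 2 : ℝ) * (((e - Finsupp.single 2 1 : Fin 3 →₀ ℕ) 2 : ℕ) : ℝ) with hc2
  have hT0 : (monomial (e - Finsupp.single 0 1 - Finsupp.single 0 1))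
      (s * (e 0 : ℝ) * (((e - Finsupp.single 0 1 : Fin 3 →₀ ℕ) 0 : ℕ) : ℝ)) = monomial d r := by
    rw [hd0exp, hsub1 0, he0]
    congr 1
    rw [hs]
    push_cast
    have h1 : ((d 0 : ℝ) + 2) ≠ 0 := by positivity
    have h2 : ((d 0 : ℝ) + 1) ≠ 0 := by positivity
    field_simp
  have key : monomial d r = laplacian ((monomial e) s)
      - (monomial d1) c1 - (monomial d2) c2 := by
    rw [hlap, hT0]; ring
  -- membership of the two correction terms
  have hT1 : (monomial d1) c1 ∈
      Submodule.map laplacian (homogeneousSubmodule (Fin 3) ℝ (m + 2)) := by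
    by_cases h : d 1 ≤ 1
    · have : c1 = 0 := by
        rw [hc1, hsub1 1, he1]
        interval_cases h' : d 1 <;> simp
      rw [this]
      simp only [map_zero]
      exact Submodule.zero_mem _
    · push_neg at h
      have hv0 : d1 0 = d 0 + 2 := by
        simp [hd1, Finsupp.tsub_apply, he0, Finsupp.single_apply]
      have hv1 : d1 1 = d 1 - 2 := by
        simp [hd1, Finsupp.tsub_apply, he1]
        omega
      have hv2 : d1 2 = d 2 := by
        simp [hd1, Finsupp.tsub_apply, he2, Finsupp.single_apply]
      have hdeg1 : d1.degree = m := by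
        rw [my_degree_fin3, hv0, hv1, hv2]
        rw [my_degree_fin3] at hdeg
        omega
      exact ih (d1 1 + d1 2) (by omega) d1 le_rfl hdeg1 c1
  have hT2 : (monomial d2) c2 ∈
      Submodule.map laplacian (homogeneousSubmodule (Fin 3) ℝ (m + 2)) := by
    by_cases h : d 2 ≤ 1
    · have : c2 = 0 := by
        rw [hc2, hsub1 2, he2]
        interval_cases h' : d 2 <;> simp
      rw [this]
      simp only [map_zero]
      exact Submodule.zero_mem _
    · push_neg at h
      have hv0 : d2 0 = d 0 + 2 := by
        simp [hd2, Finsupp.tsub_apply, he0, Finsupp.single_apply]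
      have hv1 : d2 1 = d 1 := by
        simp [hd2, Finsupp.tsub_apply, he1, Finsupp.single_apply]
      have hv2 : d2 2 = d 2 - 2 := by
        simp [hd2, Finsupp.tsub_apply, he2]
        omega
      have hdeg2 : d2.degree = m := by
        rw [my_degree_fin3, hv0, hv1, hv2]
        rw [my_degree_fin3] at hdeg
        omega
      exact ih (d2 1 + d2 2) (by omega) d2 le_rfl hdeg2 c2
  rw [key]
  exact Submodule.sub_mem _ (Submodule.sub_mem _
    (Submodule.mem_map_of_mem hmem) hT1) hT2

lemma hs_le_map (m : ℕ) :
    homogeneousSubmodule (Fin 3) ℝ m ≤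
      Submodule.map laplacian (homogeneousSubmodule (Fin 3) ℝ (m + 2)) := by
  intro p hp
  rw [p.as_sum]
  apply Submodule.sum_mem
  intro d hd
  have hdeg : d.degree = m := by
    by_contra hne
    exact (MvPolynomial.mem_support_iff.mp hd)
      (MvPolynomial.IsHomogeneous.coeff_eq_zero hp hne)
  exact monomial_mem_map m (d 1 + d 2) d le_rfl hdeg _

instance hs_fd (k : ℕ) : FiniteDimensional ℝ ↥(homogeneousSubmodule (Fin 3) ℝ k) := by
  rw [homogeneousSubmodule_eq_finsupp_supported]
  exact Module.Finite.of_basis (basisRestrictSupport ℝ _)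

set_option synthInstance.maxHeartbeats 1000000 in
set_option maxHeartbeats 1000000 in
theorem finrank_harmonic_homogeneous (k : ℕ) :
    Module.finrank ℝ
      ↥(MvPolynomial.homogeneousSubmodule (Fin 3) ℝ k ⊓ LinearMap.ker laplacian)
      = 2 * k + 1 := by
  match k with
  | 0 | 1 =>
    rw [inf_eq_left.mpr (fun p hp => LinearMap.mem_ker.mpr
      (laplacian_eq_zero_of_le_one (by omega) hp)), finrank_hs]
    decide
  | (m + 2) =>
    have hmap : ∀ x ∈ homogeneousSubmodule (Fin 3) ℝ (m + 2),
        laplacian x ∈ homogeneousSubmodule (Fin 3) ℝ m := by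
      intro x hx
      have := laplacian_mem_hs hx
      rwa [show m + 2 - 2 = m by omega] at this
    set L := laplacian.restrict hmap with hL
    have hsurj : Function.Surjective L := by
      rintro ⟨q, hq⟩
      obtain ⟨p, hp, hpq⟩ := hs_le_map m hq
      exact ⟨⟨p, hp⟩, Subtype.ext hpq⟩
    have hker : Submodule.map (homogeneousSubmodule (Fin 3) ℝ (m + 2)).subtype
        (LinearMap.ker L) = homogeneousSubmodule (Fin 3) ℝ (m + 2) ⊓ LinearMap.ker laplacian := by
      rw [hL, LinearMap.ker_restrict, Submodule.map_comap_subtype]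
    have hfr : Module.finrank ℝ
        ↥(homogeneousSubmodule (Fin 3) ℝ (m + 2) ⊓ LinearMap.ker laplacian)
        = Module.finrank ℝ ↥(LinearMap.ker L) := by
      rw [← hker]
      exact (Submodule.equivMapOfInjective _
        (Submodule.injective_subtype _) (LinearMap.ker L)).finrank_eq.symm
    have hrn := LinearMap.finrank_range_add_finrank_ker L
    rw [LinearMap.range_eq_top.mpr hsurj, finrank_top, finrank_hs, finrank_hs] at hrn
    have e1 : (m + 2 + 2).choose 2 = (m + 2).choose 2 + (2 * (m + 2) + 1) := by
      simp [Nat.choose_succ_succ]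
      omega
    rw [hfr]
    omega
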